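/- For a symmetric positive definite matrix D, log det(diag(D)) - log det(D) = 0 if and only if D is diagonal. -/

import Mathlib

open Matrix

private lemma trace_eq_sum_eigs' {p : ℕ} {A : Matrix (Fin p) (Fin p) ℝ} (hA : A.IsHermitian) :
    A.trace = ∑ i, hA.eigenvalues i := by
  conv_lhs => rw [hA.spectral_theorem, Unitary.conjStarAlgAut_apply]
  rw [Matrix.trace_mul_cycle,
    (Matrix.mem_unitaryGroup_iff').mp hA.eigenvectorUnitary.2, Matrix.one_mul,
    Matrix.trace_diagonal]
  simp

private lemma key' {p : ℕ} {A : Matrix (Fin p) (Fin p) ℝ} (hA : A.PosDef)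
    (h1 : ∀ i, A i i = 1) (hdet : A.det = 1) : A = 1 := by
  have hH := hA.1
  set lam := hH.eigenvalues with hlam
  have hpos : ∀ i, 0 < lam i := fun i => hA.eigenvalues_pos i
  have hsum : ∑ i, lam i = p := by
    rw [← trace_eq_sum_eigs' hH, Matrix.trace]
    simp [Matrix.diag, h1]
  have hprod : ∏ i, lam i = 1 := by
    have := hH.det_eq_prod_eigenvalues
    rw [hdet] at this
    exact_mod_cast this.symm
  have hlogsum : ∑ i, Real.log (lam i) = 0 := by
    rw [← Real.log_prod (fun i _ => (hpos i).ne'), hprod, Real.log_one]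
  have hle : ∀ i ∈ Finset.univ, Real.log (lam i) ≤ lam i - 1 :=
    fun i _ => Real.log_le_sub_one_of_pos (hpos i)
  have hsum2 : ∑ i, (lam i - 1) = 0 := by
    rw [Finset.sum_sub_distrib, hsum]; simp
  have heq : ∀ i ∈ Finset.univ, Real.log (lam i) = lam i - 1 := by
    by_contra hc
    push_neg at hc
    obtain ⟨i, hi, hne⟩ := hc
    have : ∑ i, Real.log (lam i) < ∑ i, (lam i - 1) :=
      Finset.sum_lt_sum hle ⟨i, hi, lt_of_le_of_ne (hle i hi) hne⟩
    rw [hlogsum, hsum2] at this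
    exact lt_irrefl _ this
  have hone : ∀ i, lam i = 1 := by
    intro i
    by_contra hne
    exact absurd (heq i (Finset.mem_univ i)) (Real.log_lt_sub_one_of_pos (hpos i) hne).ne
  have := hH.spectral_theorem
  rw [show (RCLike.ofReal ∘ lam : Fin p → ℝ) = fun _ => 1 from funext fun i => by
    simp [hone i]] at this
  rw [this, Unitary.conjStarAlgAut_apply, Matrix.diagonal_one, Matrix.mul_one,
    (Matrix.mem_unitaryGroup_iff).mp hH.eigenvectorUnitary.2]

theorem stmt1 {p : ℕ} (D : Matrix (Fin p) (Fin p) ℝ) (hD : D.PosDef) :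
    Real.log (Matrix.diagonal (fun a => D a a)).det - Real.log D.det = 0 ↔ D.IsDiag := by
  have hdiagpos : ∀ i, 0 < D i i := fun i => by
    have := hD.dotProduct_mulVec_pos (x := Pi.single i 1) (fun hc => by simpa using congr_fun hc i)
    simpa [dotProduct, mulVec, Finset.sum_apply, Pi.single_apply] using this
  constructor
  · intro h
    set t : Fin p → ℝ := fun i => (Real.sqrt (D i i))⁻¹ with ht
    have hsq : ∀ i, Real.sqrt (D i i) * Real.sqrt (D i i) = D i i :=
      fun i => Real.mul_self_sqrt (hdiagpos i).le
    have hspos : ∀ i, 0 < Real.sqrt (D i i) := fun i => Real.sqrt_pos.mpr (hdiagpos i)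
    have htpos : ∀ i, 0 < t i := fun i => inv_pos.mpr (hspos i)
    set T : Matrix (Fin p) (Fin p) ℝ := Matrix.diagonal t with hT
    have hTH : Tᴴ = T := by
      simp [hT, Matrix.diagonal_conjTranspose]
    set A : Matrix (Fin p) (Fin p) ℝ := T * D * T with hA
    have hAentry : ∀ i j, A i j = t i * D i j * t j := by
      intro i j
      simp [hA, hT, Matrix.mul_apply, Matrix.diagonal, Finset.sum_ite_eq,
        Finset.sum_ite_eq', mul_comm]
    -- A is positive definite
    have hApos : A.PosDef := by
      refine Matrix.PosDef.of_dotProduct_mulVec_pos ?_ ?_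
      · have := Matrix.isHermitian_conjTranspose_mul_mul T hD.1
        rwa [hTH] at this
      · intro x hx
        have hTx : T *ᵥ x ≠ 0 := by
          intro hc
          apply hx
          funext i
          have := congr_fun hc i
          simp [hT, Matrix.mulVec_diagonal] at this
          rcases this with h' | h'
          · exact absurd h' (htpos i).ne'
          · exact h'
        have h2 := hD.dotProduct_mulVec_pos hTx
        have : A = Tᴴ * D * T := by rw [hTH]
        rw [this]
        simpa only [star_mulVec, Matrix.dotProduct_mulVec, vecMul_vecMul] using h2
    have h1 : ∀ i, A i i = 1 := by
      intro i
      rw [hAentry i i, ht]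
      simp only []
      rw [← hsq i]
      field_simp
      rw [Real.sqrt_sq (hspos i).le]; exact div_self (pow_pos (hspos i) 2).ne'
    -- det D = prod of diagonal
    have hdetD : D.det = ∏ i, D i i := by
      have hdetpos := hD.det_pos
      have hdetdiagpos : 0 < (Matrix.diagonal (fun a => D a a)).det := by
        rw [Matrix.det_diagonal]
        exact Finset.prod_pos fun i _ => hdiagpos i
      have hlog : Real.log (Matrix.diagonal (fun a => D a a)).det = Real.log D.det :=
        by linarith [h]
      have := Real.log_injOn_pos (Set.mem_Ioi.mpr hdetdiagpos) (Set.mem_Ioi.mpr hdetpos) hlog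
      rw [← this, Matrix.det_diagonal]
    have hdetA : A.det = 1 := by
      rw [hA, Matrix.det_mul, Matrix.det_mul, hT, Matrix.det_diagonal, hdetD,
        mul_comm, ← mul_assoc, ← Finset.prod_mul_distrib, ← Finset.prod_mul_distrib]
      rw [Finset.prod_eq_one]
      intro i _
      rw [ht]
      simp only []
      rw [← hsq i]
      field_simp
      rw [Real.sqrt_sq (hspos i).le]; exact div_self (pow_pos (hspos i) 2).ne'
    have hA1 : A = 1 := key' hApos h1 hdetA
    -- recover D
    set S : Matrix (Fin p) (Fin p) ℝ := Matrix.diagonal (fun i => Real.sqrt (D i i)) with hS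
    have hST : S * T = 1 := by
      rw [hS, hT, Matrix.diagonal_mul_diagonal,
        show (fun i => Real.sqrt (D i i) * t i) = fun _ => (1 : ℝ) from
          funext fun i => mul_inv_cancel₀ (hspos i).ne', Matrix.diagonal_one]
    have hTS : T * S = 1 := by
      rw [hT, hS, Matrix.diagonal_mul_diagonal,
        show (fun i => t i * Real.sqrt (D i i)) = fun _ => (1 : ℝ) from
          funext fun i => inv_mul_cancel₀ (hspos i).ne', Matrix.diagonal_one]
    have hDeq : D = Matrix.diagonal (fun i => D i i) := by
      have : S * A * S = D := by
        rw [hA]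
        simp only [Matrix.mul_assoc]
        rw [hTS, Matrix.mul_one, ← Matrix.mul_assoc, hST, Matrix.one_mul]
      rw [← this, hA1, Matrix.mul_one, hS, Matrix.diagonal_mul_diagonal,
        show (fun i => Real.sqrt (D i i) * Real.sqrt (D i i)) = fun i => D i i from
          funext fun i => hsq i]
      simp [Matrix.diagonal_apply_eq]
    rw [hDeq]
    exact Matrix.isDiag_diagonal _
  · intro h
    have : Matrix.diagonal (fun a => D a a) = D := by
      ext i j
      by_cases hij : i = j
      · subst hij; simp
      · simp [Matrix.diagonal_apply_ne _ hij, (h hij).symm]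
    rw [this, sub_self]
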